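/- In ℝ³ with N ≥ 3 points p₁,…,p_N of which at least three are not collinear, the six vectors v_{T_x}, v_{T_y}, v_{T_z}, v_{R_x}, v_{R_y}, v_{R_z} in ℝ^{3N} are linearly independent, where v_{T_ξ} = 1_N ⊗ e_ξ and v_{R_ξ} = col(e_ξ × p₁, …, e_ξ × p_N) for ξ ∈ {x,y,z}. -/

import Mathlib

lemma cross_zero_collinear {ω d : Fin 3 → ℝ} (hω : ω ≠ 0)
    (h : crossProduct ω d = 0) : ∃ a : ℝ, d = a • ω := by
  rw [cross_apply] at h
  have h0 : ω 1 * d 2 - ω 2 * d 1 = 0 := by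
    have := congrFun h 0; simpa using this
  have h1 : ω 2 * d 0 - ω 0 * d 2 = 0 := by
    have := congrFun h 1; simpa using this
  have h2 : ω 0 * d 1 - ω 1 * d 0 = 0 := by
    have := congrFun h 2; simpa using this
  have hne : ω 0 ≠ 0 ∨ ω 1 ≠ 0 ∨ ω 2 ≠ 0 := by
    by_contra hc
    push_neg at hc
    apply hω
    funext ξ
    fin_cases ξ <;> simp [hc.1, hc.2.1, hc.2.2]
  rcases hne with hx | hx | hx
  · refine ⟨d 0 / ω 0, funext fun ξ => ?_⟩
    fin_cases ξ <;> simp <;> field_simp <;> nlinarith [h0, h1, h2]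
  · refine ⟨d 1 / ω 1, funext fun ξ => ?_⟩
    fin_cases ξ <;> simp <;> field_simp <;> nlinarith [h0, h1, h2]
  · refine ⟨d 2 / ω 2, funext fun ξ => ?_⟩
    fin_cases ξ <;> simp <;> field_simp <;> nlinarith [h0, h1, h2]

@[simp] lemma cons_val_five' {α : Type*} (a b c d e f : α) :
    (![a, b, c, d, e, f] : Fin 6 → α) 5 = f := by
  rw [show (5 : Fin 6) = Fin.succ 4 from rfl, Matrix.cons_val_succ]; simp

theorem stmt_4 {N : ℕ} (hN : 3 ≤ N) (p : Fin N → Fin 3 → ℝ)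
    (hnc : ∃ i j k : Fin N, LinearIndependent ℝ ![p j - p i, p k - p i]) :
    LinearIndependent ℝ
      (![(fun _ => ![1, 0, 0] : Fin N → Fin 3 → ℝ),
         (fun _ => ![0, 1, 0]),
         (fun _ => ![0, 0, 1]),
         (fun i => crossProduct ![1, 0, 0] (p i)),
         (fun i => crossProduct ![0, 1, 0] (p i)),
         (fun i => crossProduct ![0, 0, 1] (p i))]) := by
  obtain ⟨i, j, k, hind⟩ := hnc
  rw [Fintype.linearIndependent_iff]
  intro g hg
  rw [Fin.sum_univ_six] at hg
  set t : Fin 3 → ℝ := ![g 0, g 1, g 2] with ht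
  set ω : Fin 3 → ℝ := ![g 3, g 4, g 5] with hw
  have key : ∀ n : Fin N, t + crossProduct ω (p n) = 0 := by
    intro n
    have h1 := congrFun hg n
    funext ξ
    have h2 := congrFun h1 ξ
    fin_cases ξ <;>
      simp [cross_apply, ht, hw] at h2 ⊢ <;> linarith
  have hsub : ∀ n : Fin N, crossProduct ω (p n - p i) = 0 := by
    intro n
    have := key n
    have h2 := key i
    rw [map_sub]
    have : crossProduct ω (p n) = crossProduct ω (p i) := by
      have e1 : crossProduct ω (p n) = -t := by linear_combination (norm := abel) this
      have e2 : crossProduct ω (p i) = -t := by linear_combination (norm := abel) h2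
      rw [e1, e2]
    rw [this, sub_self]
  have hωz : ω = 0 := by
    by_contra hω
    obtain ⟨a, ha⟩ := cross_zero_collinear hω (hsub j)
    obtain ⟨b, hb⟩ := cross_zero_collinear hω (hsub k)
    rw [linearIndependent_fin2] at hind
    simp only [Matrix.cons_val_one, Matrix.head_cons, Matrix.cons_val_zero] at hind
    rcases eq_or_ne b 0 with hb0 | hb0
    · exact hind.1 (by rw [hb, hb0, zero_smul])
    · exact hind.2 (a / b) (by rw [hb, ha, smul_smul, div_mul_cancel₀ a hb0])
  have htz : t = 0 := by
    have := key i
    rw [hωz] at this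
    simpa using this
  intro m
  fin_cases m
  · simpa [ht] using congrFun htz 0
  · simpa [ht] using congrFun htz 1
  · simpa [ht] using congrFun htz 2
  · simpa [hw] using congrFun hωz 0
  · simpa [hw] using congrFun hωz 1
  · simpa [hw] using congrFun hωz 2
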